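/- arXiv:1009.1892 — 2 statements merged into one kernel-verified Lean document; each statement's English description precedes it below -/
import Mathlib

section
/- For the generalized Lucas polynomials G_{k,n} and generalized Fibonacci polynomials F_{k,n}, the partial derivative of G_{k,n} with respect to t_j equals n·F_{k,n-j}, for 1 ≤ j ≤ n. -/
open Finset MvPolynomial

/-- Index set of nonnegative integer vectors `α = (α_1, …, α_k)` with `∑ j·α_j = n`. -/
noncomputable def idx (k n : ℕ) : Finset (Fin k → ℕ) :=
  (Fintype.piFinset fun _ : Fin k => Finset.range (n + 1)).filter
    fun α => ∑ j : Fin k, (j.1 + 1) * α j = n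

/-- Generalized Fibonacci polynomials `F_{k,n}`. -/
noncomputable def Fib (k n : ℕ) : MvPolynomial (Fin k) ℚ :=
  ∑ α ∈ idx k n,
    (Nat.multinomial Finset.univ α : ℚ) • ∏ j : Fin k, X j ^ α j

/-- Generalized Lucas polynomials `G_{k,n}`, with `G_{k,0} = k`. -/
noncomputable def Luc (k n : ℕ) : MvPolynomial (Fin k) ℚ :=
  if n = 0 then (k : MvPolynomial (Fin k) ℚ)
  else ∑ α ∈ idx k n,
    (((n : ℚ) / (∑ j : Fin k, α j)) * (Nat.multinomial Finset.univ α : ℚ)) •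
      ∏ j : Fin k, X j ^ α j

lemma mem_idx {k n : ℕ} {α : Fin k → ℕ} :
    α ∈ idx k n ↔ ∑ i : Fin k, (i.1 + 1) * α i = n := by
  simp only [idx, Finset.mem_filter, Fintype.mem_piFinset, Finset.mem_range]
  refine ⟨fun h => h.2, fun h => ⟨fun i => ?_, h⟩⟩
  have h1 : α i ≤ (i.1 + 1) * α i := Nat.le_mul_of_pos_left _ (Nat.succ_pos _)
  have h2 : (i.1 + 1) * α i ≤ ∑ i : Fin k, (i.1 + 1) * α i :=
    Finset.single_le_sum (f := fun i : Fin k => (i.1 + 1) * α i)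
      (fun _ _ => Nat.zero_le _) (Finset.mem_univ i)
  omega

lemma key_mult {k : ℕ} (α : Fin k → ℕ) (j : Fin k) (h : α j ≠ 0) :
    α j * Nat.multinomial Finset.univ α =
      (∑ i : Fin k, α i) *
        Nat.multinomial Finset.univ (Function.update α j (α j - 1)) := by
  set β := Function.update α j (α j - 1) with hβ
  have hβj : β j = α j - 1 := Function.update_self _ _ _
  have hβne : ∀ i, i ≠ j → β i = α i := fun i hi => Function.update_of_ne hi _ _
  have hfacj : (α j).factorial = α j * (β j).factorial := by
    rw [hβj]
    obtain ⟨m, hm⟩ := Nat.exists_eq_succ_of_ne_zero h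
    rw [hm]; simp [Nat.factorial_succ]
  have hprod : ∏ i : Fin k, (α i).factorial = α j * ∏ i : Fin k, (β i).factorial := by
    have hpe : ∏ i ∈ Finset.univ.erase j, (β i).factorial
        = ∏ i ∈ Finset.univ.erase j, (α i).factorial :=
      Finset.prod_congr rfl fun i hi => by rw [hβne i (Finset.mem_erase.mp hi).1]
    rw [← Finset.mul_prod_erase Finset.univ (fun i => (α i).factorial) (Finset.mem_univ j),
        ← Finset.mul_prod_erase Finset.univ (fun i => (β i).factorial) (Finset.mem_univ j),
        hpe, hfacj, mul_assoc]
  have hsum : ∑ i : Fin k, α i = (∑ i : Fin k, β i) + 1 := by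
    have hse : ∑ i ∈ Finset.univ.erase j, β i = ∑ i ∈ Finset.univ.erase j, α i :=
      Finset.sum_congr rfl fun i hi => hβne i (Finset.mem_erase.mp hi).1
    rw [← Finset.add_sum_erase Finset.univ α (Finset.mem_univ j),
        ← Finset.add_sum_erase Finset.univ β (Finset.mem_univ j), hse, hβj]
    omega
  have spec1 := Nat.multinomial_spec Finset.univ α
  have spec2 := Nat.multinomial_spec Finset.univ β
  have hpos : 0 < ∏ i : Fin k, (α i).factorial :=
    Finset.prod_pos fun i _ => Nat.factorial_pos _
  apply Nat.eq_of_mul_eq_mul_right hpos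
  calc α j * Nat.multinomial Finset.univ α * ∏ i : Fin k, (α i).factorial
      = α j * ((∏ i : Fin k, (α i).factorial) * Nat.multinomial Finset.univ α) := by ring
    _ = α j * (∑ i : Fin k, α i).factorial := by rw [spec1]
    _ = α j * ((∑ i : Fin k, α i) * (∑ i : Fin k, β i).factorial) := by
        rw [hsum, Nat.factorial_succ]
    _ = (∑ i : Fin k, α i) * Nat.multinomial Finset.univ β *
          (α j * ∏ i : Fin k, (β i).factorial) := by rw [← spec2]; ring
    _ = (∑ i : Fin k, α i) * Nat.multinomial Finset.univ β *
          ∏ i : Fin k, (α i).factorial := by rw [← hprod]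

lemma prod_X_pow {k : ℕ} (α : Fin k → ℕ) :
    (∏ i : Fin k, (X i : MvPolynomial (Fin k) ℚ) ^ α i) =
      monomial (Finsupp.equivFunOnFinite.symm α) 1 := by
  rw [← prod_X_pow_eq_monomial]
  refine (Finset.prod_subset (Finset.subset_univ _) ?_).symm
  · intro i _ hi
    have h0 : (Finsupp.equivFunOnFinite.symm α) i = 0 := Finsupp.notMem_support_iff.mp hi
    have : α i = 0 := h0
    simp [this]

lemma symm_sub_single {k : ℕ} (α : Fin k → ℕ) (j : Fin k) :
    Finsupp.equivFunOnFinite.symm α - Finsupp.single j 1 =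
      Finsupp.equivFunOnFinite.symm (Function.update α j (α j - 1)) := by
  ext i
  rcases eq_or_ne i j with rfl | hij
  · simp [Finsupp.sub_apply]
  · simp [Finsupp.sub_apply, Finsupp.single_apply, (Ne.symm hij), Function.update_of_ne hij]

/-- The partial derivative of `G_{k,n}` with respect to `t_j` is `n · F_{k,n-j}`,
for `1 ≤ j ≤ n` (the variable `t_j` corresponds to the index `j : Fin k`,
i.e. `j.1 + 1` in 1-based counting). -/
theorem pderiv_Luc (k n : ℕ) (j : Fin k) (hj : j.1 + 1 ≤ n) :
    pderiv j (Luc k n) = (n : ℚ) • Fib k (n - (j.1 + 1)) := by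
  have hn : n ≠ 0 := by omega
  rw [Luc, if_neg hn, map_sum, Fib, Finset.smul_sum]
  -- Rewrite LHS terms as monomials
  have hL : ∀ α : Fin k → ℕ,
      pderiv j ((((n : ℚ) / (∑ i : Fin k, α i)) * (Nat.multinomial Finset.univ α : ℚ)) •
          ∏ i : Fin k, X i ^ α i)
        = monomial (Finsupp.equivFunOnFinite.symm α - Finsupp.single j 1)
            ((((n : ℚ) / (∑ i : Fin k, α i)) * (Nat.multinomial Finset.univ α : ℚ)) * α j) := by
    intro α
    rw [prod_X_pow, ← (monomial _).map_smul, smul_eq_mul, mul_one, pderiv_monomial]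
    congr 1
  have hR : ∀ β : Fin k → ℕ,
      (n : ℚ) • ((Nat.multinomial Finset.univ β : ℚ) • ∏ i : Fin k, X i ^ β i)
        = monomial (Finsupp.equivFunOnFinite.symm β)
            ((n : ℚ) * (Nat.multinomial Finset.univ β : ℚ)) := by
    intro β
    rw [prod_X_pow, smul_smul, ← (monomial _).map_smul, smul_eq_mul, mul_one]
  simp only [hL, hR]
  -- Drop the terms with α j = 0
  rw [← Finset.sum_filter_of_ne (p := fun α => α j ≠ 0) (s := idx k n)
    (fun α _ hne h0 => by simp [h0] at hne)]
  refine Finset.sum_nbij' (fun α => Function.update α j (α j - 1))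
    (fun β => Function.update β j (β j + 1)) ?_ ?_ ?_ ?_ ?_
  · intro α hα
    rw [Finset.mem_filter, mem_idx] at hα
    obtain ⟨hs, hne⟩ := hα
    have hne' : α j ≠ 0 := by simpa using hne
    rw [mem_idx]
    have e1 : ∑ i : Fin k, (i.1 + 1) * Function.update α j (α j - 1) i
        = (j.1 + 1) * (α j - 1) + ∑ i ∈ Finset.univ.erase j, (i.1 + 1) * α i := by
      rw [← Finset.add_sum_erase Finset.univ
        (fun i => (i.1 + 1) * Function.update α j (α j - 1) i) (Finset.mem_univ j)]
      simp only [Function.update_self]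
      congr 1
      exact Finset.sum_congr rfl fun i hi => by
        rw [Function.update_of_ne (Finset.mem_erase.mp hi).1]
    have e2 : ∑ i : Fin k, (i.1 + 1) * α i
        = (j.1 + 1) * α j + ∑ i ∈ Finset.univ.erase j, (i.1 + 1) * α i :=
      (Finset.add_sum_erase _ _ (Finset.mem_univ j)).symm
    have e3 : (j.1 + 1) * α j = (j.1 + 1) * (α j - 1) + (j.1 + 1) := by
      have h4 := Nat.sub_add_cancel (Nat.one_le_iff_ne_zero.mpr hne')
      calc (j.1 + 1) * α j = (j.1 + 1) * ((α j - 1) + 1) := by rw [h4]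
        _ = (j.1 + 1) * (α j - 1) + (j.1 + 1) := by ring
    show ∑ i : Fin k, (i.1 + 1) * Function.update α j (α j - 1) i = n - (j.1 + 1)
    rw [e1]
    rw [e2] at hs
    set C := ∑ i ∈ Finset.univ.erase j, (i.1 + 1) * α i with hC
    omega
  · intro β hβ
    rw [mem_idx] at hβ
    rw [Finset.mem_filter, mem_idx]
    constructor
    · have e1 : ∑ i : Fin k, (i.1 + 1) * Function.update β j (β j + 1) i
          = (j.1 + 1) * (β j + 1) + ∑ i ∈ Finset.univ.erase j, (i.1 + 1) * β i := by
        rw [← Finset.add_sum_erase Finset.univ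
          (fun i => (i.1 + 1) * Function.update β j (β j + 1) i) (Finset.mem_univ j)]
        simp only [Function.update_self]
        congr 1
        exact Finset.sum_congr rfl fun i hi => by
          rw [Function.update_of_ne (Finset.mem_erase.mp hi).1]
      have e2 : ∑ i : Fin k, (i.1 + 1) * β i
          = (j.1 + 1) * β j + ∑ i ∈ Finset.univ.erase j, (i.1 + 1) * β i :=
        (Finset.add_sum_erase _ _ (Finset.mem_univ j)).symm
      have e3 : (j.1 + 1) * (β j + 1) = (j.1 + 1) * β j + (j.1 + 1) := by ring
      show ∑ i : Fin k, (i.1 + 1) * Function.update β j (β j + 1) i = n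
      rw [e1]
      rw [e2] at hβ
      set C := ∑ i ∈ Finset.univ.erase j, (i.1 + 1) * β i with hC
      omega
    · simp
  · intro α hα
    rw [Finset.mem_filter] at hα
    have hne : α j ≠ 0 := by simpa using hα.2
    funext i
    rcases eq_or_ne i j with rfl | hij
    · simp [Function.update_self]; omega
    · simp [Function.update_of_ne hij]
  · intro β _
    funext i
    rcases eq_or_ne i j with rfl | hij
    · simp [Function.update_self]
    · simp [Function.update_of_ne hij]
  · intro α hα
    rw [Finset.mem_filter, mem_idx] at hα
    obtain ⟨hs, hne⟩ := hα
    have hne' : α j ≠ 0 := by simpa using hne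
    rw [symm_sub_single]
    congr 1
    -- coefficient identity
    have hsumne : (∑ i : Fin k, α i) ≠ 0 := by
      intro h0
      have := Finset.sum_eq_zero_iff.mp h0 j (Finset.mem_univ j)
      exact hne' this
    have hkey : (α j : ℚ) * (Nat.multinomial Finset.univ α : ℚ) =
        ((∑ i : Fin k, α i : ℕ) : ℚ) *
          (Nat.multinomial Finset.univ (Function.update α j (α j - 1)) : ℚ) := by
      exact_mod_cast congrArg (fun m : ℕ => (m : ℚ)) (key_mult α j hne')
    have hQ : ((∑ i : Fin k, α i : ℕ) : ℚ) ≠ 0 := Nat.cast_ne_zero.mpr hsumne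
    calc (n : ℚ) / ((∑ i : Fin k, α i : ℕ) : ℚ) * (Nat.multinomial Finset.univ α : ℚ) * (α j : ℚ)
        = (n : ℚ) * ((α j : ℚ) * (Nat.multinomial Finset.univ α : ℚ)) /
            ((∑ i : Fin k, α i : ℕ) : ℚ) := by ring
      _ = (n : ℚ) * (((∑ i : Fin k, α i : ℕ) : ℚ) *
            (Nat.multinomial Finset.univ (Function.update α j (α j - 1)) : ℚ)) /
            ((∑ i : Fin k, α i : ℕ) : ℚ) := by rw [hkey]
      _ = (n : ℚ) * (Nat.multinomial Finset.univ (Function.update α j (α j - 1)) : ℚ) := by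
            rw [mul_comm ((∑ i : Fin k, α i : ℕ) : ℚ)
                (Nat.multinomial Finset.univ (Function.update α j (α j - 1)) : ℚ),
              ← mul_assoc, mul_div_assoc, div_self hQ, mul_one]
end

section
/- Let Γ(n) be the Catalan numbers with Γ(0) = 1, and let Γ̄ be the convolution inverse of Γ. Then the Rearick logarithm L(Γ)_n = Σ_{j=0}^n j·Γ(j)·Γ̄(n-j) equals binom(2n-1, n) for all n ≥ 1. -/
open Finset

/-- The `n`-th Catalan number `Γ(n) = C(2n, n)/(n+1)`. -/
def Γ (n : ℕ) : ℚ := (Nat.choose (2 * n) n : ℚ) / (n + 1)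

/-- Convolution product of sequences. -/
def conv (P Q : ℕ → ℚ) (n : ℕ) : ℚ :=
  ∑ j ∈ Finset.range (n + 1), P j * Q (n - j)

/-- The Rearick logarithm of a sequence `F` with convolution inverse `Fi`. -/
def LOG (F Fi : ℕ → ℚ) (n : ℕ) : ℚ :=
  ∑ j ∈ Finset.range (n + 1), (j : ℚ) * F j * Fi (n - j)

lemma Γ_cat (n : ℕ) : Γ n = (catalan n : ℚ) := by
  have h := congrArg (Nat.cast : ℕ → ℚ) (succ_mul_catalan_eq_centralBinom n)
  unfold Nat.centralBinom at h
  push_cast at h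
  unfold Γ
  have hne : ((n : ℚ) + 1) ≠ 0 := by positivity
  field_simp
  linarith [h]

lemma Γ0 : Γ 0 = 1 := by simp [Γ]

lemma conv_Γ (n : ℕ) : conv Γ Γ n = Γ (n + 1) := by
  simp only [conv, Γ_cat]
  rw [catalan_succ, Fin.sum_univ_eq_sum_range (fun i => catalan i * catalan (n - i)) (n + 1)]
  push_cast
  rfl

lemma conv_inv_unique (A B : ℕ → ℚ)
    (h : ∀ n, conv Γ A n = conv Γ B n) : ∀ n, A n = B n := by
  intro n
  induction n using Nat.strong_induction_on with
  | _ n ih =>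
    have key : ∀ C : ℕ → ℚ, conv Γ C n = (∑ i ∈ range n, Γ (i + 1) * C (n - (i + 1))) + C n := by
      intro C
      rw [conv, Finset.sum_range_succ']
      simp [Γ0]
    have sums_eq : ∑ i ∈ range n, Γ (i + 1) * A (n - (i + 1))
        = ∑ i ∈ range n, Γ (i + 1) * B (n - (i + 1)) := by
      apply Finset.sum_congr rfl
      intro i hi
      have hi' := Finset.mem_range.mp hi
      rw [ih _ (by omega)]
    have hh := h n
    rw [key A, key B, sums_eq] at hh
    linarith

/-- The explicit convolution inverse of the Catalan sequence. -/
def Γb' (n : ℕ) : ℚ := if n = 0 then 1 else -Γ (n - 1)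

lemma conv_Γb' (n : ℕ) : conv Γ Γb' n = if n = 0 then 1 else 0 := by
  cases n with
  | zero => simp [conv, Γ0, Γb']
  | succ m =>
    rw [conv, Finset.sum_range_succ]
    have h1 : ∀ j ∈ range (m + 1), Γ j * Γb' (m + 1 - j) = -(Γ j * Γ (m - j)) := by
      intro j hj
      have hj' := Finset.mem_range.mp hj
      have he : m + 1 - j = (m - j) + 1 := by omega
      rw [he]
      simp [Γb']
    rw [Finset.sum_congr rfl h1]
    have h2 : ∑ j ∈ range (m + 1), -(Γ j * Γ (m - j)) = -conv Γ Γ m := by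
      rw [conv, Finset.sum_neg_distrib]
    rw [h2, conv_Γ]
    simp [Γb']

lemma two_S (m : ℕ) :
    2 * (∑ j ∈ range (m + 1), (j : ℚ) * Γ j * Γ (m - j)) = m * Γ (m + 1) := by
  have href := Finset.sum_range_reflect (fun j => (j : ℚ) * Γ j * Γ (m - j)) (m + 1)
  simp only [Nat.add_sub_cancel] at href
  have key : ∑ j ∈ range (m + 1), (((m - j : ℕ) : ℚ) * Γ (m - j) * Γ (m - (m - j)))
      = ∑ j ∈ range (m + 1), (j : ℚ) * Γ j * Γ (m - j) := href
  have comb : ∀ j ∈ range (m + 1),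
      (j : ℚ) * Γ j * Γ (m - j) + ((m - j : ℕ) : ℚ) * Γ (m - j) * Γ (m - (m - j))
        = (m : ℚ) * (Γ j * Γ (m - j)) := by
    intro j hj
    have hj' := Finset.mem_range.mp hj
    rw [Nat.sub_sub_self (by omega : j ≤ m)]
    rw [Nat.cast_sub (by omega : j ≤ m)]
    ring
  calc 2 * (∑ j ∈ range (m + 1), (j : ℚ) * Γ j * Γ (m - j))
      = (∑ j ∈ range (m + 1), (j : ℚ) * Γ j * Γ (m - j))
        + ∑ j ∈ range (m + 1), (((m - j : ℕ) : ℚ) * Γ (m - j) * Γ (m - (m - j))) := by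
        rw [key]; ring
    _ = ∑ j ∈ range (m + 1), ((m : ℚ) * (Γ j * Γ (m - j))) := by
        rw [← Finset.sum_add_distrib]
        exact Finset.sum_congr rfl comb
    _ = (m : ℚ) * conv Γ Γ m := by rw [conv, Finset.mul_sum]
    _ = m * Γ (m + 1) := by rw [conv_Γ]

lemma choose_half (n : ℕ) (hn : 1 ≤ n) :
    2 * Nat.choose (2 * n - 1) n = Nat.choose (2 * n) n := by
  obtain ⟨m, rfl⟩ : ∃ m, n = m + 1 := ⟨n - 1, by omega⟩
  have h2 : 2 * (m + 1) - 1 = 2 * m + 1 := by omega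
  have hsymm : Nat.choose (2 * m + 1) m = Nat.choose (2 * m + 1) (m + 1) := by
    rw [← Nat.choose_symm (by omega : m + 1 ≤ 2 * m + 1)]
    congr 1
    omega
  have h3 : 2 * (m + 1) = (2 * m + 1) + 1 := by omega
  rw [h2, h3, Nat.choose_succ_succ (2 * m + 1) m, hsymm]
  ring

/-- `L(Γ)_n = binom(2n-1, n)` for `n ≥ 1`. -/
theorem LOG_catalan (Γb : ℕ → ℚ) (hΓb0 : Γb 0 = 1)
    (hΓb : ∀ n, conv Γ Γb n = if n = 0 then 1 else 0)
    (n : ℕ) (hn : 1 ≤ n) :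
    LOG Γ Γb n = (Nat.choose (2 * n - 1) n : ℚ) := by
  have hΓbe : ∀ k, Γb k = Γb' k :=
    conv_inv_unique Γb Γb' (fun k => by rw [hΓb k, conv_Γb' k])
  obtain ⟨m, rfl⟩ : ∃ m, n = m + 1 := ⟨n - 1, by omega⟩
  rw [LOG, Finset.sum_range_succ]
  have h1 : ∀ j ∈ range (m + 1), (j : ℚ) * Γ j * Γb (m + 1 - j)
      = -((j : ℚ) * Γ j * Γ (m - j)) := by
    intro j hj
    have hj' := Finset.mem_range.mp hj
    rw [hΓbe]
    have he : m + 1 - j = (m - j) + 1 := by omega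
    rw [he]
    simp [Γb']
  rw [Finset.sum_congr rfl h1, Finset.sum_neg_distrib]
  have hS := two_S m
  have hb0 : Γb (m + 1 - (m + 1)) = 1 := by simp [hΓbe, Γb']
  rw [hb0]
  have hch := congrArg (Nat.cast : ℕ → ℚ) (choose_half (m + 1) (by omega))
  push_cast at hch
  have hΓval : ((m : ℚ) + 1 + 1) * Γ (m + 1) = (Nat.choose (2 * (m + 1)) (m + 1) : ℚ) := by
    unfold Γ
    have hne : ((m : ℚ) + 1 + 1) ≠ 0 := by positivity
    push_cast
    field_simp
  push_cast
  push_cast at hΓval hS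
  linarith
end
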